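/- Let E training environments be observed with σ_e² = 1 for all e, and for ε > 1 let Φ_ε be the featurizer that outputs [z_c, 0] when z_e lies in the union ℬ_r of the 2E balls of radius √(ε d_e) centered at ±μ_e (e ∈ ℰ) and outputs [z_c, z_e] otherwise. Then with β̂ = [β_c, β_{e;ERM}, β_0], the predictor (Φ_ε, β̂) exactly matches the optimal invariant predictor on at least a 1 − p_ε fraction of the training distribution of each environment, where p_ε := exp{−d_e·min(ε−1, (ε−1)²)/8}, and matches the ERM-optimal solution on the remaining inputs. -/

import Mathlib

open MeasureTheory Real Matrix
open scoped NNReal ENNReal BigOperators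

noncomputable section

/-- Isotropic Gaussian measure on `ℝ^d`, as a product of one-dimensional Gaussians. -/
def gaussPi {d : ℕ} (μ : Fin d → ℝ) (v : ℝ≥0) : Measure (Fin d → ℝ) :=
  Measure.pi fun i => ProbabilityTheory.gaussianReal (μ i) v

/-- The latent space: invariant features paired with environmental features. -/
abbrev Latent (dc de : ℕ) := (Fin dc → ℝ) × (Fin de → ℝ)

/-- Joint law of the latent features `(z_c, z_e)` given the label `y ∈ {±1}`:
`z_c ~ N(y μ_c, σ_c² I)` independent of `z_e ~ N(y μ_e, σ_e² I)`. -/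
def latentLaw {dc de : ℕ} (μc : Fin dc → ℝ) (vc : ℝ≥0) (μe : Fin de → ℝ) (ve : ℝ≥0)
    (y : ℝ) : Measure (Latent dc de) :=
  (gaussPi (fun j => y * μc j) vc).prod (gaussPi (fun j => y * μe j) ve)

/-- Logistic loss `ℓ(σ(t), y) = log(1 + exp(-y t))` for `y ∈ {±1}` and logit `t`. -/
def logLoss (y t : ℝ) : ℝ := Real.log (1 + Real.exp (-(y * t)))

/-- Logistic risk of a logit function `g` of the latent features, on the environment with
environmental mean `μe` and variance `ve` (label `y = 1` has probability `η`). -/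
def lRisk {dc de : ℕ} (η : ℝ) (μc : Fin dc → ℝ) (vc : ℝ≥0) (μe : Fin de → ℝ) (ve : ℝ≥0)
    (g : Latent dc de → ℝ) : ℝ :=
  η * ∫ z, logLoss 1 (g z) ∂(latentLaw μc vc μe ve 1)
    + (1 - η) * ∫ z, logLoss (-1) (g z) ∂(latentLaw μc vc μe ve (-1))

/-- 0-1 risk of the sign classifier induced by the logit function `g`. -/
def zoRisk {dc de : ℕ} (η : ℝ) (μc : Fin dc → ℝ) (vc : ℝ≥0) (μe : Fin de → ℝ) (ve : ℝ≥0)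
    (g : Latent dc de → ℝ) : ℝ :=
  η * ((latentLaw μc vc μe ve 1) {z | g z ≤ 0}).toReal
    + (1 - η) * ((latentLaw μc vc μe ve (-1)) {z | 0 ≤ g z}).toReal

/-- Logit of the optimal invariant predictor: `β_cᵀ z_c + β₀` with
`β_c = 2 μ_c / σ_c²` and `β₀ = log (η / (1-η))`. -/
def invLogit {dc de : ℕ} (η : ℝ) (μc : Fin dc → ℝ) (vc : ℝ≥0) (z : Latent dc de) : ℝ :=
  (∑ j, (2 * μc j / (vc : ℝ)) * z.1 j) + Real.log (η / (1 - η))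

/-- Logit of a linear featurizer `Φ(f(z_c, z_e)) = A z_c + B z_e` composed with the
linear classifier `(β, b)` (`b` is the bias/intercept). -/
def linLogit {k dc de : ℕ} (A : Matrix (Fin k) (Fin dc) ℝ) (B : Matrix (Fin k) (Fin de) ℝ)
    (β : Fin k → ℝ) (b : ℝ) (z : Latent dc de) : ℝ :=
  β ⬝ᵥ (A *ᵥ z.1 + B *ᵥ z.2) + b

/-- A classifier over features living in the latent space, together with a bias term. -/
abbrev Cls (dc de : ℕ) := (Fin dc → ℝ) × (Fin de → ℝ) × ℝ

/-- Logit of a (possibly non-linear) featurizer `Φ` valued in the latent space,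
composed with the classifier `w = (β_c-part, β_e-part, bias)`. -/
def featLogit {dc de : ℕ} (Φ : Latent dc de → Latent dc de) (w : Cls dc de)
    (z : Latent dc de) : ℝ :=
  w.1 ⬝ᵥ (Φ z).1 + w.2.1 ⬝ᵥ (Φ z).2 + w.2.2

/-- Squared Euclidean norm of the gradient of `F : Cls dc de → ℝ` at `w`,
written coordinatewise via directional derivatives. -/
def gradSq {dc de : ℕ} (F : Cls dc de → ℝ) (w : Cls dc de) : ℝ :=
  (∑ i, (fderiv ℝ F w (Pi.single i 1, 0, 0)) ^ 2)
    + (∑ j, (fderiv ℝ F w ((0 : Fin dc → ℝ), Pi.single j 1, 0)) ^ 2)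
    + (fderiv ℝ F w ((0 : Fin dc → ℝ), (0 : Fin de → ℝ), 1)) ^ 2

/-- Union over the environments of the two Euclidean balls of squared radius `r2 i`
centered at `μ i` and `-μ i`. -/
def ballUnion {de E : ℕ} (μ : Fin E → Fin de → ℝ) (r2 : Fin E → ℝ) : Set (Fin de → ℝ) :=
  {x | ∃ i, (∑ j, (x j - μ i j) ^ 2) ≤ r2 i ∨ (∑ j, (x j + μ i j) ^ 2) ≤ r2 i}

/-- The featurizer `Φ_ε`: it outputs `(z_c, 0)` when `z_e` lies in the union of balls `ℬ`,
and `(z_c, z_e)` otherwise. -/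
def PhiEps {dc de E : ℕ} (μ : Fin E → Fin de → ℝ) (r2 : Fin E → ℝ) (z : Latent dc de) :
    Latent dc de :=
  (z.1, (ballUnion μ r2)ᶜ.indicator id z.2)

section AuxLemmas
open ProbabilityTheory

lemma key_log_ineq (ε : ℝ) (hε : 1 < ε) :
    min (ε - 1) ((ε - 1) ^ 2) ≤ 4 * (ε - 1 - Real.log ε) := by
  rcases le_or_gt ε 2 with h2 | h2
  · have hu0 : (0:ℝ) < ε - 1 := by linarith
    have hu1 : ε - 1 ≤ 1 := by linarith
    set u := ε - 1 with hu
    have hv : 0 ≤ u - u ^ 2 / 4 := by nlinarith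
    have h1 : 1 + u ≤ Real.exp (u - u ^ 2 / 4) := by
      have := Real.quadratic_le_exp_of_nonneg hv
      nlinarith
    have hlog : Real.log ε ≤ u - u ^ 2 / 4 := by
      rw [(by ring : ε = 1 + u)] at *
      exact (Real.log_le_iff_le_exp (by linarith)).2 h1
    calc min u (u ^ 2) ≤ u ^ 2 := min_le_right _ _
      _ ≤ 4 * ((1 + u) - 1 - Real.log (1 + u)) := by
          rw [(by ring : (1:ℝ) + u = ε)]; nlinarith
      _ = 4 * (ε - 1 - Real.log ε) := by rw [(by ring : (1:ℝ) + u = ε)]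
  · have hlog2 : Real.log ε ≤ ε / 2 - 1 + Real.log 2 := by
      have h := Real.log_le_sub_one_of_pos (x := ε / 2) (by linarith)
      have : Real.log (ε / 2) = Real.log ε - Real.log 2 := by
        rw [Real.log_div (by linarith) (by norm_num)]
      linarith
    have hl2 : Real.log 2 < 0.6931471808 := Real.log_two_lt_d9
    calc min (ε - 1) ((ε - 1) ^ 2) ≤ ε - 1 := min_le_left _ _
      _ ≤ 4 * (ε - 1 - Real.log ε) := by nlinarith

lemma pdf_mul_exp {t : ℝ} (x : ℝ) :
    Real.exp (t * x ^ 2) * gaussianPDFReal 0 1 x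
      = (Real.sqrt (2 * π))⁻¹ * Real.exp (-(1 / 2 - t) * x ^ 2) := by
  rw [gaussianPDFReal]
  simp only [NNReal.coe_one, mul_one, sub_zero]
  rw [mul_left_comm, ← Real.exp_add]
  congr 2
  ring

lemma integrable_exp_sq_gauss {t : ℝ} (ht : t < 1 / 2) :
    Integrable (fun x => Real.exp (t * x ^ 2)) (gaussianReal 0 1) := by
  rw [gaussianReal_of_var_ne_zero 0 one_ne_zero, gaussianPDF_def]
  rw [integrable_withDensity_iff (measurable_gaussianPDFReal 0 1).ennreal_ofReal
    (Filter.Eventually.of_forall fun x => ENNReal.ofReal_lt_top)]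
  have hb : (0:ℝ) < 1 / 2 - t := by linarith
  have : (fun x => Real.exp (t * x ^ 2) * (ENNReal.ofReal (gaussianPDFReal 0 1 x)).toReal)
      = fun x => (Real.sqrt (2 * π))⁻¹ * Real.exp (-(1 / 2 - t) * x ^ 2) := by
    funext x
    rw [ENNReal.toReal_ofReal (gaussianPDFReal_nonneg 0 1 x), pdf_mul_exp]
  rw [this]
  exact (integrable_exp_neg_mul_sq hb).const_mul _

lemma integral_exp_sq_gauss {t : ℝ} (ht : t < 1 / 2) :
    ∫ x, Real.exp (t * x ^ 2) ∂(gaussianReal 0 1) = Real.sqrt (1 / (1 - 2 * t)) := by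
  have hb : (0:ℝ) < 1 / 2 - t := by linarith
  rw [gaussianReal_of_var_ne_zero 0 one_ne_zero, gaussianPDF_def]
  have hmeas : Measurable fun x => (gaussianPDFReal 0 1 x).toNNReal :=
    (measurable_gaussianPDFReal 0 1).real_toNNReal
  have h1 : (fun x => ENNReal.ofReal (gaussianPDFReal 0 1 x))
      = fun x => ((gaussianPDFReal 0 1 x).toNNReal : ℝ≥0∞) := rfl
  rw [h1, integral_withDensity_eq_integral_smul hmeas]
  have heq : (fun x => ((gaussianPDFReal 0 1 x).toNNReal : ℝ≥0) • Real.exp (t * x ^ 2))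
      = fun x => (Real.sqrt (2 * π))⁻¹ * Real.exp (-(1 / 2 - t) * x ^ 2) := by
    funext x
    rw [NNReal.smul_def, Real.coe_toNNReal _ (gaussianPDFReal_nonneg 0 1 x), smul_eq_mul,
      mul_comm (gaussianPDFReal 0 1 x), pdf_mul_exp]
  rw [heq, integral_const_mul, integral_gaussian]
  rw [← Real.sqrt_inv, ← Real.sqrt_mul (by positivity)]
  have hπ : π ≠ 0 := Real.pi_ne_zero
  have h2t : (1:ℝ) - 2 * t ≠ 0 := by intro h; rw [sub_eq_zero] at h; linarith
  congr 1
  field_simp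

lemma pi_map_shift (de : ℕ) (m : Fin de → ℝ) :
    Measure.map (fun x j => x j + m j) (Measure.pi fun _ : Fin de => gaussianReal 0 1)
      = Measure.pi fun j => gaussianReal (m j) 1 := by
  refine (Measure.pi_eq fun s hs => ?_).symm
  have hF : Measurable fun (x : Fin de → ℝ) j => x j + m j :=
    measurable_pi_lambda _ fun j => (measurable_pi_apply j).add_const _
  rw [Measure.map_apply hF (MeasurableSet.univ_pi hs)]
  have hpre : (fun x j => x j + m j) ⁻¹' Set.pi Set.univ s
      = Set.pi Set.univ fun j => (· + m j) ⁻¹' s j := by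
    ext x; simp [Set.mem_pi]
  rw [hpre, Measure.pi_pi]
  refine Finset.prod_congr rfl fun j _ => ?_
  rw [← Measure.map_apply (measurable_add_const (m j)) (hs j),
    gaussianReal_map_add_const (m j), zero_add]

lemma integral_exp_sum_sq (de : ℕ) {t : ℝ} (ht : t < 1 / 2) :
    ∫ x, Real.exp (t * ∑ j, x j ^ 2) ∂(Measure.pi fun _ : Fin de => gaussianReal 0 1)
      = Real.sqrt (1 / (1 - 2 * t)) ^ de := by
  letI : MeasureSpace ℝ := ⟨gaussianReal 0 1⟩
  haveI : SigmaFinite (volume : Measure ℝ) := (inferInstance : SigmaFinite (gaussianReal 0 1))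
  have hsum : ∀ x : Fin de → ℝ, Real.exp (t * ∑ j, x j ^ 2)
      = ∏ j, Real.exp (t * x j ^ 2) := by
    intro x; rw [← Real.exp_sum, Finset.mul_sum]
  simp_rw [hsum]
  rw [show (Measure.pi fun _ : Fin de => gaussianReal 0 1) = (volume : Measure (Fin de → ℝ))
    from rfl]
  rw [show (volume : Measure (Fin de → ℝ)) = Measure.pi fun _ => (volume : Measure ℝ) from rfl,
    MeasureTheory.integral_fintype_prod_eq_pow (ι := Fin de) (fun x : ℝ => Real.exp (t * x ^ 2))]
  rw [show (volume : Measure ℝ) = gaussianReal 0 1 from rfl, integral_exp_sq_gauss ht,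
    Fintype.card_fin]

lemma integrable_exp_sum_sq (de : ℕ) {t : ℝ} (ht : t < 1 / 2) :
    Integrable (fun x => Real.exp (t * ∑ j, x j ^ 2))
      (Measure.pi fun _ : Fin de => gaussianReal 0 1) := by
  letI : MeasureSpace ℝ := ⟨gaussianReal 0 1⟩
  haveI : SigmaFinite (volume : Measure ℝ) := (inferInstance : SigmaFinite (gaussianReal 0 1))
  have hsum : ∀ x : Fin de → ℝ, Real.exp (t * ∑ j, x j ^ 2)
      = ∏ j, Real.exp (t * x j ^ 2) := by
    intro x; rw [← Real.exp_sum, Finset.mul_sum]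
  simp_rw [hsum]
  exact MeasureTheory.Integrable.fintype_prod (f := fun _ x => Real.exp (t * x ^ 2))
    fun _ => integrable_exp_sq_gauss ht

lemma gauss_tail (de : ℕ) (m : Fin de → ℝ) (ε : ℝ) (hε : 1 < ε) :
    (Measure.pi fun j => gaussianReal (m j) 1) {x | ε * de < ∑ j, (x j - m j) ^ 2}
      ≤ ENNReal.ofReal (Real.exp (-(de * min (ε - 1) ((ε - 1) ^ 2)) / 8)) := by
  have hε0 : (0:ℝ) < ε := by linarith
  set t : ℝ := (ε - 1) / (2 * ε) with htdef
  have ht0 : 0 < t := div_pos (by linarith) (by positivity)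
  have ht : t < 1 / 2 := by
    rw [htdef, div_lt_iff₀ (by positivity)]
    ring_nf
    nlinarith
  set P : Measure (Fin de → ℝ) := Measure.pi fun _ : Fin de => gaussianReal 0 1 with hP
  have hF : Measurable fun (x : Fin de → ℝ) j => x j + m j :=
    measurable_pi_lambda _ fun j => (measurable_pi_apply j).add_const _
  have hSm : MeasurableSet {x : Fin de → ℝ | ε * de < ∑ j, (x j - m j) ^ 2} := by
    apply measurableSet_lt measurable_const
    exact Finset.measurable_sum _ fun j _ => ((measurable_pi_apply j).sub_const _).pow_const 2
  rw [← pi_map_shift de m, Measure.map_apply hF hSm]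
  have hpre : (fun x j => x j + m j) ⁻¹' {x : Fin de → ℝ | ε * de < ∑ j, (x j - m j) ^ 2}
      = {x : Fin de → ℝ | ε * de < ∑ j, x j ^ 2} := by
    ext x; simp
  rw [hpre]
  set f : (Fin de → ℝ) → ℝ := fun x => Real.exp (t * ∑ j, x j ^ 2) with hf
  have hsub : {x : Fin de → ℝ | ε * de < ∑ j, x j ^ 2}
      ⊆ {x | Real.exp (t * (ε * de)) ≤ f x} := by
    intro x hx
    simp only [Set.mem_setOf_eq] at hx ⊢
    exact Real.exp_le_exp.2 (by nlinarith)
  have hmark := mul_meas_ge_le_integral_of_nonneg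
    (ae_of_all P fun x => (Real.exp_pos _).le) (integrable_exp_sum_sq de ht)
    (Real.exp (t * (ε * de)))
  rw [integral_exp_sum_sq de ht] at hmark
  have h2t : 1 - 2 * t = 1 / ε := by
    rw [htdef]; field_simp
    ring
  have hMval : Real.sqrt (1 / (1 - 2 * t)) = Real.sqrt ε := by
    rw [h2t, one_div_one_div]
  rw [hMval] at hmark
  have hfin : P {x | Real.exp (t * (ε * de)) ≤ f x} ≠ ⊤ := measure_ne_top _ _
  have hmono := measure_mono (μ := P) hsub
  refine le_trans hmono ?_
  rw [← ENNReal.ofReal_toReal hfin]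
  apply ENNReal.ofReal_le_ofReal
  have hstep : (P {x | Real.exp (t * (ε * de)) ≤ f x}).toReal
      ≤ Real.sqrt ε ^ de * Real.exp (-(t * (ε * de))) := by
    rw [Real.exp_neg, ← div_eq_mul_inv]
    exact (le_div_iff₀' (Real.exp_pos _)).2 hmark
  refine le_trans hstep ?_
  have hsqrt : Real.sqrt ε = Real.exp (Real.log ε / 2) := by
    rw [← Real.log_sqrt hε0.le, Real.exp_log (Real.sqrt_pos.2 hε0)]
  have htε : t * ε = (ε - 1) / 2 := by
    rw [htdef]; field_simp
  rw [hsqrt, ← Real.exp_nat_mul, ← Real.exp_add, Real.exp_le_exp]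
  have hkey := key_log_ineq ε hε
  have hde : (0:ℝ) ≤ (de : ℝ) := Nat.cast_nonneg de
  have htd : t * (ε * de) = (ε - 1) / 2 * de := by
    rw [← mul_assoc, htε]
  rw [htd]
  nlinarith [mul_le_mul_of_nonneg_left hkey hde]

end AuxLemmas

/-- Theorem 3, part 2: with unit environmental variances and `ε > 1`,
the featurizer `Φ_ε` (built from the union of the `2E` balls of radius `√(ε d_e)` around
`±μ_e`) together with the classifier `β̂ = [β_c, β_{e;ERM}, β₀]` exactly matches the
optimal invariant predictor on at least a `1 - p_ε` fraction of each training
environment, where `p_ε = exp(-d_e min(ε-1,(ε-1)²)/8)`, and matches the ERM-optimal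
predictor on the remaining inputs. -/
theorem stmt6
    (dc de E : ℕ) (hE : 0 < E) (ε : ℝ) (hε : 1 < ε)
    (η : ℝ) (hη0 : 0 < η) (hη1 : η < 1)
    (μc : Fin dc → ℝ) (vc : ℝ≥0) (hvc : 0 < vc)
    (μ : Fin E → Fin de → ℝ) (βe : Fin de → ℝ)
    -- β_{e;ERM} minimizes the average training logistic risk on the full features
    (hERM : ∀ βe' : Fin de → ℝ,
      (1 / (E : ℝ)) * ∑ i, lRisk η μc vc (μ i) 1
          (fun z => (fun j => 2 * μc j / (vc : ℝ)) ⬝ᵥ z.1 + βe ⬝ᵥ z.2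
            + Real.log (η / (1 - η)))
        ≤ (1 / (E : ℝ)) * ∑ i, lRisk η μc vc (μ i) 1
            (fun z => (fun j => 2 * μc j / (vc : ℝ)) ⬝ᵥ z.1 + βe' ⬝ᵥ z.2
              + Real.log (η / (1 - η)))) :
    -- on at least a 1 - p_ε fraction of each training environment, the predictor
    -- coincides with the optimal invariant predictor
    (∀ (i : Fin E) (y : ℝ), y = 1 ∨ y = -1 →
      ENNReal.ofReal (1 - Real.exp (-(de * min (ε - 1) ((ε - 1) ^ 2)) / 8))
        ≤ (latentLaw μc vc (μ i) 1 y)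
            {z | featLogit (PhiEps μ (fun _ => ε * de) (E := E)) 
                (fun j => 2 * μc j / (vc : ℝ), βe, Real.log (η / (1 - η))) z
              = invLogit η μc vc z}) ∧
    -- inside the union of balls it matches the optimal invariant predictor pointwise
    (∀ z : Latent dc de, z.2 ∈ ballUnion μ (fun _ => ε * de) →
      featLogit (PhiEps μ (fun _ => ε * de))
          (fun j => 2 * μc j / (vc : ℝ), βe, Real.log (η / (1 - η))) z
        = invLogit η μc vc z) ∧
    -- on the remaining inputs it matches the ERM-optimal predictor
    (∀ z : Latent dc de, z.2 ∉ ballUnion μ (fun _ => ε * de) →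
      featLogit (PhiEps μ (fun _ => ε * de))
          (fun j => 2 * μc j / (vc : ℝ), βe, Real.log (η / (1 - η))) z
        = (fun j => 2 * μc j / (vc : ℝ)) ⬝ᵥ z.1 + βe ⬝ᵥ z.2 + Real.log (η / (1 - η))) := by
  have h2 : ∀ z : Latent dc de, z.2 ∈ ballUnion μ (fun _ => ε * de) →
      featLogit (PhiEps μ (fun _ => ε * de))
          (fun j => 2 * μc j / (vc : ℝ), βe, Real.log (η / (1 - η))) z
        = invLogit η μc vc z := by
    intro z hz
    simp only [featLogit, PhiEps, invLogit]
    rw [Set.indicator_of_notMem (by simpa using hz)]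
    simp [dotProduct]
  have h3 : ∀ z : Latent dc de, z.2 ∉ ballUnion μ (fun _ => ε * de) →
      featLogit (PhiEps μ (fun _ => ε * de))
          (fun j => 2 * μc j / (vc : ℝ), βe, Real.log (η / (1 - η))) z
        = (fun j => 2 * μc j / (vc : ℝ)) ⬝ᵥ z.1 + βe ⬝ᵥ z.2 + Real.log (η / (1 - η)) := by
    intro z hz
    simp only [featLogit, PhiEps]
    rw [Set.indicator_of_mem (by simpa using hz) id]
    rfl
  refine ⟨?_, h2, h3⟩
  intro i y hy
  set m : Fin de → ℝ := fun j => y * μ i j with hm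
  set T : Set (Fin de → ℝ) := {x | ∑ j, (x j - m j) ^ 2 ≤ ε * de} with hT
  have hTm : MeasurableSet T :=
    measurableSet_le
      (Finset.measurable_sum _ fun j _ => ((measurable_pi_apply j).sub_const _).pow_const 2)
      measurable_const
  haveI hp1 : IsProbabilityMeasure (gaussPi (fun j => y * μc j) vc) := by
    unfold gaussPi; infer_instance
  haveI hp2 : IsProbabilityMeasure (gaussPi m 1) := by
    unfold gaussPi; infer_instance
  have hcompl : gaussPi m 1 Tᶜ
      ≤ ENNReal.ofReal (Real.exp (-(de * min (ε - 1) ((ε - 1) ^ 2)) / 8)) := by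
    have hTc : Tᶜ = {x : Fin de → ℝ | ε * de < ∑ j, (x j - m j) ^ 2} := by
      ext x; simp [hT, not_le]
    rw [hTc]
    exact gauss_tail de m ε hε
  have hsub : Set.univ ×ˢ T ⊆
      {z : Latent dc de | featLogit (PhiEps μ (fun _ => ε * de) (E := E))
          (fun j => 2 * μc j / (vc : ℝ), βe, Real.log (η / (1 - η))) z
        = invLogit η μc vc z} := by
    rintro ⟨z1, z2⟩ ⟨-, hz2⟩
    refine h2 _ ⟨i, ?_⟩
    simp only [hT, Set.mem_setOf_eq] at hz2
    rcases hy with rfl | rfl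
    · left
      calc (∑ j, (z2 j - μ i j) ^ 2) = ∑ j, (z2 j - m j) ^ 2 := by
            refine Finset.sum_congr rfl fun j _ => ?_
            simp [hm]
        _ ≤ ε * de := hz2
    · right
      calc (∑ j, (z2 j + μ i j) ^ 2) = ∑ j, (z2 j - m j) ^ 2 := by
            refine Finset.sum_congr rfl fun j _ => ?_
            simp only [hm]; ring
        _ ≤ ε * de := hz2
  calc ENNReal.ofReal (1 - Real.exp (-(de * min (ε - 1) ((ε - 1) ^ 2)) / 8))
      = 1 - ENNReal.ofReal (Real.exp (-(de * min (ε - 1) ((ε - 1) ^ 2)) / 8)) := by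
        rw [ENNReal.ofReal_sub _ (Real.exp_pos _).le, ENNReal.ofReal_one]
    _ ≤ gaussPi m 1 T := by
        rw [tsub_le_iff_right]
        calc (1 : ℝ≥0∞) = gaussPi m 1 T + gaussPi m 1 Tᶜ := by
              rw [measure_add_measure_compl hTm, measure_univ]
          _ ≤ gaussPi m 1 T
              + ENNReal.ofReal (Real.exp (-(de * min (ε - 1) ((ε - 1) ^ 2)) / 8)) :=
            add_le_add_right hcompl _
    _ = gaussPi (fun j => y * μc j) vc Set.univ * gaussPi m 1 T := by
        rw [measure_univ, one_mul]
    _ = latentLaw μc vc (μ i) 1 y (Set.univ ×ˢ T) := by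
        rw [latentLaw, Measure.prod_prod]
    _ ≤ _ := measure_mono hsub
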